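/- Let w be a word over {O,U} of even length containing at least one O and at least one U, with Φ(w) ≥ 0 (choose orientation so the OU number is nonnegative). Then, viewing w cyclically, w contains at least Φ(w) pairwise disjoint occurrences of the factor 'OU' (an O immediately followed, cyclically, by a U). -/

import Mathlib

inductive Letter : Type
  | O : Letter
  | U : Letter
  deriving DecidableEq, BEq, Repr

open Letter

/-- number of O's in a word -/
def countO (w : List Letter) : ℕ := w.count O

/-- number of U's in a word -/
def countU (w : List Letter) : ℕ := w.count U

/-- number of O's in odd 1-based positions (even 0-based index) -/
def NOo (w : List Letter) : ℕ := ((w.zipIdx.map Prod.swap).filter (fun p => p.1 % 2 == 0 && p.2 == O)).length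

/-- number of O's in even 1-based positions -/
def NOe (w : List Letter) : ℕ := ((w.zipIdx.map Prod.swap).filter (fun p => p.1 % 2 == 1 && p.2 == O)).length

/-- number of U's in odd 1-based positions -/
def NUo (w : List Letter) : ℕ := ((w.zipIdx.map Prod.swap).filter (fun p => p.1 % 2 == 0 && p.2 == U)).length

/-- number of U's in even 1-based positions -/
def NUe (w : List Letter) : ℕ := ((w.zipIdx.map Prod.swap).filter (fun p => p.1 % 2 == 1 && p.2 == U)).length

/-- twice the OU signed quantity: N^O_e + N^U_o − N^O_o − N^U_e -/
def twoPhi (w : List Letter) : ℤ := (NOe w : ℤ) + NUo w - NOo w - NUe w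

/-- the (signed) OU number Φ of a word of even length -/
def Phi (w : List Letter) : ℤ := twoPhi w / 2

/-- cyclic access to the letters of a word -/
def cget (w : List Letter) (i : ℕ) : Letter := w.getD (i % w.length) O

/-- a cyclic occurrence of the factor `OU` at position `i` -/
def OUat (w : List Letter) (i : ℕ) : Prop := cget w i = O ∧ cget w (i + 1) = U

/-- a cyclic occurrence of the factor `UO` at position `i` -/
def UOat (w : List Letter) (i : ℕ) : Prop := cget w i = U ∧ cget w (i + 1) = O

instance (w : List Letter) (i : ℕ) : Decidable (OUat w i) := by unfold OUat; infer_instance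
instance (w : List Letter) (i : ℕ) : Decidable (UOat w i) := by unfold UOat; infer_instance

/-- the cyclic factors at positions `i` and `j` (each occupying `{i, i+1 mod n}`) are disjoint -/
def PairDisjoint (n i j : ℕ) : Prop :=
  i ≠ j ∧ i ≠ (j + 1) % n ∧ (i + 1) % n ≠ j ∧ (i + 1) % n ≠ (j + 1) % n

/-- a word is alternating in the cyclic sense -/
def CyclicAlternating (w : List Letter) : Prop :=
  w.Chain' (· ≠ ·) ∧ ∀ a ∈ w.head?, ∀ b ∈ w.getLast?, a ≠ b

/-- one reduction: delete two adjacent equal letters -/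
def Reduces (w w' : List Letter) : Prop :=
  ∃ a b x, w = a ++ x :: x :: b ∧ w' = a ++ b

/-- `ReducesN k w w'` : `w'` is obtained from `w` by exactly `k` reductions -/
inductive ReducesN : ℕ → List Letter → List Letter → Prop
  | refl (w : List Letter) : ReducesN 0 w w
  | step {k : ℕ} {w w' w'' : List Letter} :
      Reduces w w' → ReducesN k w' w'' → ReducesN (k + 1) w w''
open Finset

lemma sum_shift (n : ℕ) (g : ℕ → ℤ) :
    ∑ i ∈ Finset.range n, g ((i+1) % n) = ∑ i ∈ Finset.range n, g i := by
  cases n with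
  | zero => simp
  | succ m =>
    rw [Finset.sum_range_succ,
      show (∑ i ∈ Finset.range (m+1), g i) = ∑ i ∈ Finset.range m, g (i+1) + g 0 from
        Finset.sum_range_succ' g m]
    congr 1
    · exact Finset.sum_congr rfl fun i hi => by
        rw [Nat.mod_eq_of_lt (by have := Finset.mem_range.mp hi; omega)]
    · simp

lemma countP_enumFrom (p : ℕ × Letter → Bool) : ∀ (w : List Letter) (k : ℕ),
    (List.filter p ((List.zipIdx w k).map Prod.swap)).length
      = ∑ i ∈ Finset.range w.length, (if p (k + i, w.getD i Letter.O) then 1 else 0) := by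
  intro w
  induction w with
  | nil => simp
  | cons a t ih =>
    intro k
    rw [List.length_cons, Finset.sum_range_succ']
    simp only [List.zipIdx_cons, List.map_cons, Prod.swap_prod_mk, List.filter_cons, List.getD_cons_succ, List.getD_cons_zero]
    have h2 : (∑ i ∈ Finset.range t.length, (if p (k + (i+1), t.getD i Letter.O) then (1:ℕ) else 0))
        = (List.filter p ((List.zipIdx t (k+1)).map Prod.swap)).length := by
      rw [ih (k+1)]
      exact Finset.sum_congr rfl fun i _ => by rw [show k+(i+1) = (k+1)+i by omega]
    rw [h2, Nat.add_zero]
    by_cases hp : p (k, a) <;> simp [hp]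

/-- sign of position: +1 at even 0-based index -/
def sg (i : ℕ) : ℤ := if i % 2 = 0 then 1 else -1

/-- letter sign: +1 for U, -1 for O -/
def ul (w : List Letter) (i : ℕ) : ℤ := if cget w i = U then 1 else -1

lemma cget_mod (w : List Letter) (i : ℕ) : cget w (i % w.length) = cget w i := by
  unfold cget
  rw [Nat.mod_mod_of_dvd _ dvd_rfl]

lemma sg_values (i : ℕ) : sg i = 1 ∨ sg i = -1 := by
  unfold sg; split <;> simp

lemma sg_flip {n : ℕ} (hn : Even n) {i : ℕ} (hi : i < n) : sg i = - sg ((i+1) % n) := by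
  obtain ⟨m, hm⟩ := hn
  by_cases h : i + 1 < n
  · rw [Nat.mod_eq_of_lt h]
    unfold sg
    rcases Nat.mod_two_eq_zero_or_one i with h2|h2 <;>
      rcases Nat.mod_two_eq_zero_or_one (i+1) with h4|h4 <;> simp [h2, h4] <;> omega
  · have h1 : i + 1 = n := by omega
    rw [h1, Nat.mod_self]
    have h5 : i % 2 = 1 := by omega
    simp [sg, h5]

lemma twoPhi_eq_sum (w : List Letter) :
    twoPhi w = ∑ i ∈ Finset.range w.length, sg i * ul w i := by
  unfold twoPhi NOe NUo NOo NUe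
  rw [countP_enumFrom, countP_enumFrom, countP_enumFrom, countP_enumFrom]
  push_cast
  rw [← Finset.sum_add_distrib, ← Finset.sum_sub_distrib, ← Finset.sum_sub_distrib]
  refine Finset.sum_congr rfl fun i hi => ?_
  have hlt := Finset.mem_range.mp hi
  have hc : cget w i = w.getD i Letter.O := by
    unfold cget; rw [Nat.mod_eq_of_lt hlt]
  rcases c : w.getD i Letter.O <;>
    rcases Nat.mod_two_eq_zero_or_one i with h2|h2 <;>
      simp only [sg, ul, hc, c, h2, Nat.zero_add] <;> decide

lemma cget_succ (w : List Letter) (i : ℕ) : cget w ((i+1) % w.length) = cget w (i+1) :=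
  cget_mod w (i+1)

lemma P1 (w : List Letter) (i : ℕ) :
    ul w ((i+1) % w.length) - ul w i
      = 2*(if OUat w i then (1:ℤ) else 0) - 2*(if UOat w i then (1:ℤ) else 0) := by
  unfold ul
  rw [cget_succ]
  rcases c1 : cget w i <;> rcases c2 : cget w (i+1) <;>
    simp [OUat, UOat, c1, c2]

lemma P2 (w : List Letter) (i : ℕ) :
    sg i * (ul w i - ul w ((i+1) % w.length))
      ≤ 2*(if OUat w i then (1:ℤ) else 0) + 2*(if UOat w i then (1:ℤ) else 0) := by
  unfold ul
  rw [cget_succ]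
  rcases sg_values i with hs|hs <;>
    rcases c1 : cget w i <;> rcases c2 : cget w (i+1) <;>
      simp [OUat, UOat, c1, c2, hs]

theorem stmt7 (w : List Letter) (h : Even w.length)
    (hO : 1 ≤ countO w) (hU : 1 ≤ countU w) (hP : 0 ≤ Phi w) :
    ∃ S : Finset ℕ,
      (∀ i ∈ S, i < w.length ∧ OUat w i) ∧
      (∀ i ∈ S, ∀ j ∈ S, i ≠ j → PairDisjoint w.length i j) ∧
      Phi w ≤ (S.card : ℤ) := by
  classical
  refine ⟨(Finset.range w.length).filter (fun i => OUat w i), ?_, ?_, ?_⟩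
  · intro i hi
    rw [Finset.mem_filter, Finset.mem_range] at hi
    exact hi
  · intro i hi j hj hij
    rw [Finset.mem_filter, Finset.mem_range] at hi hj
    have hi1 := hi.1
    have hiO := hi.2.1
    have hiU := hi.2.2
    have hj1 := hj.1
    have hjO := hj.2.1
    have hjU := hj.2.2
    refine ⟨hij, ?_, ?_, ?_⟩
    · intro hE
      rw [hE, cget_succ] at hiO
      rw [hiO] at hjU
      exact Letter.noConfusion hjU
    · intro hE
      rw [← hE, cget_succ] at hjO
      rw [hjO] at hiU
      exact Letter.noConfusion hiU
    · have e1 : (i+1) % w.length = i+1 ∨ (i+1 = w.length ∧ (i+1) % w.length = 0) := by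
        rcases Nat.lt_or_ge (i+1) w.length with hc|hc
        · exact Or.inl (Nat.mod_eq_of_lt hc)
        · have hq : i+1 = w.length := by omega
          exact Or.inr ⟨hq, by rw [hq, Nat.mod_self]⟩
      have e2 : (j+1) % w.length = j+1 ∨ (j+1 = w.length ∧ (j+1) % w.length = 0) := by
        rcases Nat.lt_or_ge (j+1) w.length with hc|hc
        · exact Or.inl (Nat.mod_eq_of_lt hc)
        · have hq : j+1 = w.length := by omega
          exact Or.inr ⟨hq, by rw [hq, Nat.mod_self]⟩
      omega
  · -- the counting bound
    set n := w.length with hn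
    have hShift : ∑ i ∈ Finset.range n, sg i * ul w ((i+1) % n) = - twoPhi w := by
      calc ∑ i ∈ Finset.range n, sg i * ul w ((i+1) % n)
          = ∑ i ∈ Finset.range n, -((fun j => sg j * ul w j) ((i+1) % n)) := by
            refine Finset.sum_congr rfl fun i hi => ?_
            rw [sg_flip h (Finset.mem_range.mp hi)]; ring
        _ = -∑ i ∈ Finset.range n, sg ((i+1) % n) * ul w ((i+1) % n) := by
            rw [Finset.sum_neg_distrib]
        _ = -∑ j ∈ Finset.range n, sg j * ul w j :=
            congrArg Neg.neg (sum_shift n (fun j => sg j * ul w j))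
        _ = - twoPhi w := by rw [← twoPhi_eq_sum]
    have hdouble : (∑ i ∈ Finset.range n, sg i * (ul w i - ul w ((i+1) % n)))
        = 2 * twoPhi w := by
      calc ∑ i ∈ Finset.range n, sg i * (ul w i - ul w ((i+1) % n))
          = ∑ i ∈ Finset.range n, (sg i * ul w i - sg i * ul w ((i+1) % n)) := by
            refine Finset.sum_congr rfl fun i _ => ?_; ring
        _ = (∑ i ∈ Finset.range n, sg i * ul w i)
            - ∑ i ∈ Finset.range n, sg i * ul w ((i+1) % n) := Finset.sum_sub_distrib _ _
        _ = twoPhi w - (- twoPhi w) := by rw [← twoPhi_eq_sum, hShift]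
        _ = 2 * twoPhi w := by ring
    have hOUUO : (∑ i ∈ Finset.range n, (if OUat w i then (1:ℤ) else 0))
        = ∑ i ∈ Finset.range n, (if UOat w i then (1:ℤ) else 0) := by
      have h0 : ∑ i ∈ Finset.range n, (ul w ((i+1) % n) - ul w i) = 0 := by
        rw [Finset.sum_sub_distrib, sum_shift n (ul w), sub_self]
      rw [Finset.sum_congr rfl (fun i _ => P1 w i), Finset.sum_sub_distrib,
        ← Finset.mul_sum, ← Finset.mul_sum] at h0
      linarith
    have hb : ∑ i ∈ Finset.range n, sg i * (ul w i - ul w ((i+1) % n))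
        ≤ ∑ i ∈ Finset.range n,
            (2*(if OUat w i then (1:ℤ) else 0) + 2*(if UOat w i then (1:ℤ) else 0)) :=
      Finset.sum_le_sum fun i _ => P2 w i
    rw [Finset.sum_add_distrib, ← Finset.mul_sum, ← Finset.mul_sum] at hb
    have key : twoPhi w ≤ 2 * ∑ i ∈ Finset.range n, (if OUat w i then (1:ℤ) else 0) := by
      rw [hdouble] at hb
      linarith
    have hcard : ((((Finset.range n).filter (fun i => OUat w i)).card : ℤ))
        = ∑ i ∈ Finset.range n, (if OUat w i then (1:ℤ) else 0) := by
      rw [Finset.card_filter]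
      push_cast
      rfl
    rw [hcard]
    show twoPhi w / 2 ≤ _
    set c := ∑ i ∈ Finset.range n, (if OUat w i then (1:ℤ) else 0)
    calc twoPhi w / 2 ≤ (2 * c) / 2 := Int.ediv_le_ediv (by norm_num) key
      _ = c := Int.mul_ediv_cancel_left c (by norm_num)
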